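/- Let M be the 16×16 integer matrix given (in the basis of exceptional classes of Theorem 4.3) with characteristic polynomial (X-1)^4 (X+1)^2 (X²-X+1)(X²+X+1)^3 (X²-3X+1). Then the spectral radius of M equals (3+√5)/2, which is strictly greater than 1. -/

import Mathlib

open Polynomial

/-- Let `M` be a 16×16 integer matrix whose characteristic polynomial is
`(X-1)^4 (X+1)^2 (X²-X+1)(X²+X+1)^3 (X²-3X+1)`. Then the spectral radius of `M`
(largest modulus of a complex eigenvalue, i.e. of a complex root of its characteristic
polynomial) equals `(3+√5)/2`, which is strictly greater than `1`. -/
theorem stmt16 (M : Matrix (Fin 16) (Fin 16) ℤ)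
    (h : (M.map ((↑) : ℤ → ℂ)).charpoly =
      (X - 1) ^ 4 * (X + 1) ^ 2 * (X ^ 2 - X + 1) * (X ^ 2 + X + 1) ^ 3 *
        (X ^ 2 - C (3 : ℂ) * X + 1)) :
    IsGreatest
      {r : ℝ | ∃ z : ℂ, (M.map ((↑) : ℤ → ℂ)).charpoly.IsRoot z ∧ ‖z‖ = r}
      ((3 + Real.sqrt 5) / 2) ∧
    1 < (3 + Real.sqrt 5) / 2 := by
  have hs5 : Real.sqrt 5 ^ 2 = 5 := Real.sq_sqrt (by norm_num)
  have hs5n : (0:ℝ) ≤ Real.sqrt 5 := Real.sqrt_nonneg 5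
  have hs5le3 : Real.sqrt 5 ≤ 3 := by clear h; nlinarith
  have hs5ge1 : (1:ℝ) ≤ Real.sqrt 5 := by clear h; nlinarith
  have hsC : ((Real.sqrt 5 : ℝ) : ℂ) ^ 2 = 5 := by
    rw [← Complex.ofReal_pow, hs5]; norm_num
  have ha : (0:ℝ) ≤ (3 + Real.sqrt 5) / 2 := by linarith
  have hb : (0:ℝ) ≤ (3 - Real.sqrt 5) / 2 := by linarith
  have hone : (1:ℝ) ≤ (3 + Real.sqrt 5) / 2 := by linarith
  refine ⟨⟨?_, ?_⟩, by linarith⟩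
  · -- membership
    refine ⟨(((3 + Real.sqrt 5) / 2 : ℝ) : ℂ), ?_, ?_⟩
    · rw [h]
      have hroot : ((((3 + Real.sqrt 5) / 2 : ℝ) : ℂ)) ^ 2
          - 3 * (((3 + Real.sqrt 5) / 2 : ℝ) : ℂ) + 1 = 0 := by
        push_cast
        linear_combination (1/4 : ℂ) * hsC
      simp only [IsRoot, eval_mul, eval_pow, eval_add, eval_sub, eval_X, eval_one,
        eval_C, mul_eq_zero]
      right
      linear_combination hroot
    · rw [Complex.norm_real, Real.norm_eq_abs, abs_of_nonneg ha]
  · -- upper bound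
    rintro r ⟨z, hz, rfl⟩
    rw [h] at hz
    have hz' : (z - 1) ^ 4 * (z + 1) ^ 2 * (z ^ 2 - z + 1) * (z ^ 2 + z + 1) ^ 3 *
        (z ^ 2 - 3 * z + 1) = 0 := by
      simpa [IsRoot, eval_mul, eval_pow, eval_add, eval_sub, eval_X, eval_one, eval_C]
        using hz
    have habs_one : ∀ w : ℂ, ‖w‖ = 1 → ‖w‖ ≤ (3 + Real.sqrt 5) / 2 := by
      intro w hw; rw [hw]; exact hone
    rcases mul_eq_zero.mp hz' with h1 | h5
    · rcases mul_eq_zero.mp h1 with h1 | h4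
      · rcases mul_eq_zero.mp h1 with h1 | h3
        · rcases mul_eq_zero.mp h1 with h1 | h2
          · -- (z-1)^4 = 0
            have : z = 1 := by
              have := (pow_eq_zero_iff (by norm_num : (4:ℕ) ≠ 0)).mp h1
              exact sub_eq_zero.mp this
            rw [this]; simpa using hone
          · -- (z+1)^2 = 0
            have : z = -1 := by
              have := (pow_eq_zero_iff (by norm_num : (2:ℕ) ≠ 0)).mp h2
              linear_combination this
            rw [this]; simpa using hone
        · -- z^2 - z + 1 = 0
          have hcube : z ^ 3 = -1 := by linear_combination (z + 1) * h3
          have habs : ‖z‖ ^ 3 = 1 := by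
            rw [← norm_pow, hcube]; simp
          have hzn : (0:ℝ) ≤ ‖z‖ := norm_nonneg z
          have : ‖z‖ = 1 := by
            have hf : (‖z‖ - 1) *
                (‖z‖ ^ 2 + ‖z‖ + 1) = 0 := by
              linear_combination habs
            rcases mul_eq_zero.mp hf with hg | hg
            · linarith [sub_eq_zero.mp hg]
            · clear h hz; nlinarith
          rw [this]; exact hone
      · -- (z^2 + z + 1)^3 = 0
        have h4' : z ^ 2 + z + 1 = 0 :=
          (pow_eq_zero_iff (by norm_num : (3:ℕ) ≠ 0)).mp h4
        have hcube : z ^ 3 = 1 := by linear_combination (z - 1) * h4'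
        have habs : ‖z‖ ^ 3 = 1 := by
          rw [← norm_pow, hcube]; simp
        have hzn : (0:ℝ) ≤ ‖z‖ := norm_nonneg z
        have : ‖z‖ = 1 := by
          have hf : (‖z‖ - 1) *
              (‖z‖ ^ 2 + ‖z‖ + 1) = 0 := by
            linear_combination habs
          rcases mul_eq_zero.mp hf with hg | hg
          · linarith [sub_eq_zero.mp hg]
          · clear h hz; nlinarith
        rw [this]; exact hone
    · -- z^2 - 3z + 1 = 0
      have hfac : (z - (((3 + Real.sqrt 5) / 2 : ℝ) : ℂ)) *
          (z - (((3 - Real.sqrt 5) / 2 : ℝ) : ℂ)) = 0 := by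
        push_cast
        linear_combination h5 - (1/4 : ℂ) * hsC
      rcases mul_eq_zero.mp hfac with hg | hg
      · rw [sub_eq_zero.mp hg, Complex.norm_real, Real.norm_eq_abs, abs_of_nonneg ha]
      · rw [sub_eq_zero.mp hg, Complex.norm_real, Real.norm_eq_abs, abs_of_nonneg hb]
        linarith
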